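/- arXiv:1906.08412 — 2 statements merged into one kernel-verified Lean document; each statement's English description precedes it below -/
import Mathlib

section
/- The Monte Carlo upper bounds on the empirical risk are monotonically non-increasing in the number of samples S: for every S ≥ 1, L̂(f) ≤ L̂_{upper,S+1}(f) ≤ L̂_{upper,S}(f), where L̂_{upper,S}(f) = E_{{λ_j}_{j=1}^S, {x'_j}_{j=1}^S}[(1/n)∑_i ℓ((1/S)∑_{j=1}^S h(ψ(x_i, x'_j, λ_j)), y_i)]. -/
open MeasureTheory

section dipHelpers

lemma dip_mp_eval {m : ℕ} (μ : Measure ℝ) [IsProbabilityMeasure μ] (k : Fin (m+1)) :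
    MeasurePreserving (fun Λ : Fin (m+1) → ℝ => Λ k)
      (Measure.pi fun _ => μ) μ := by
  have h1 := measurePreserving_piFinSuccAbove (fun _ : Fin (m+1) => μ) k
  have hfst : MeasurePreserving (Prod.fst)
      (μ.prod (Measure.pi fun _ : Fin m => μ)) μ := by
    refine ⟨measurable_fst, ?_⟩
    rw [Measure.map_fst_prod]
    simp
  have h2 : (fun Λ : Fin (m+1) → ℝ => Λ k)
      = Prod.fst ∘ (MeasurableEquiv.piFinSuccAbove (fun _ => ℝ) k) := rfl
  rw [h2]
  exact hfst.comp h1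

lemma dip_mp_tail {m : ℕ} (μ : Measure ℝ) [IsProbabilityMeasure μ] (k : Fin (m+1)) :
    MeasurePreserving (fun Λ : Fin (m+1) → ℝ => fun j => Λ (k.succAbove j))
      (Measure.pi fun _ => μ) (Measure.pi fun _ : Fin m => μ) := by
  have h1 := measurePreserving_piFinSuccAbove (fun _ : Fin (m+1) => μ) k
  have hsnd : MeasurePreserving (Prod.snd)
      (μ.prod (Measure.pi fun _ : Fin m => μ)) (Measure.pi fun _ : Fin m => μ) := by
    refine ⟨measurable_snd, ?_⟩
    rw [Measure.map_snd_prod]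
    simp
  have h2 : (fun Λ : Fin (m+1) → ℝ => fun j => Λ (k.succAbove j))
      = Prod.snd ∘ (MeasurableEquiv.piFinSuccAbove (fun _ => ℝ) k) := rfl
  rw [h2]
  exact hsnd.comp h1

lemma dip_integral_comp_mp {α β : Type*} [MeasurableSpace α] [MeasurableSpace β]
    {μ : Measure α} {ν : Measure β} {f : α → β} (hf : MeasurePreserving f μ ν)
    {E : Type*} [NormedAddCommGroup E] [NormedSpace ℝ E] {g : β → E}
    (hg : AEStronglyMeasurable g ν) :
    ∫ a, g (f a) ∂μ = ∫ b, g b ∂ν := by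
  rw [← hf.map_eq] at hg ⊢
  exact (integral_map hf.measurable.aemeasurable hg).symm

lemma dip_convexOn_sum {E' : Type*} [AddCommMonoid E'] [Module ℝ E'] {ι : Type*}
    (t : Finset ι) (f : ι → E' → ℝ) (hf : ∀ i ∈ t, ConvexOn ℝ Set.univ (f i)) :
    ConvexOn ℝ Set.univ (fun u => ∑ i ∈ t, f i u) := by
  classical
  induction t using Finset.cons_induction with
  | empty => simpa using convexOn_const (0:ℝ) convex_univ
  | cons a s ha ih =>
    simp only [Finset.sum_cons]
    exact (hf a (Finset.mem_cons_self a s)).add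
      (ih fun i hi => hf i (Finset.mem_cons.2 (Or.inr hi)))

lemma dip_sum_eval {n m : ℕ} (k : Fin (m+1)) {M : Type*} [AddCommMonoid M] (g : Fin n → M) :
    ∑ σ : Fin (m+1) → Fin n, g (σ k) = n^m • ∑ a, g a := by
  classical
  calc ∑ σ : Fin (m+1) → Fin n, g (σ k)
      = ∑ p : Fin n × (Fin m → Fin n), g ((Fin.insertNthEquiv (fun _ => Fin n) k) p k) :=
        (Equiv.sum_comp _ _).symm
    _ = ∑ p : Fin n × (Fin m → Fin n), g p.1 := by
        refine Finset.sum_congr rfl fun p _ => ?_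
        simp [Fin.insertNthEquiv]
    _ = ∑ a : Fin n, ∑ _σ' : Fin m → Fin n, g a := Fintype.sum_prod_type ..
    _ = ∑ a : Fin n, n^m • g a := by
        refine Finset.sum_congr rfl fun a _ => ?_
        simp [Finset.sum_const, Fintype.card_fun]
    _ = n^m • ∑ a, g a := (Finset.smul_sum).symm

lemma dip_sum_tail {n m : ℕ} (k : Fin (m+1)) {M : Type*} [AddCommMonoid M]
    (g : (Fin m → Fin n) → M) :
    ∑ σ : Fin (m+1) → Fin n, g (fun j => σ (k.succAbove j)) = n • ∑ σ', g σ' := by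
  classical
  calc ∑ σ : Fin (m+1) → Fin n, g (fun j => σ (k.succAbove j))
      = ∑ p : Fin n × (Fin m → Fin n),
          g (fun j => (Fin.insertNthEquiv (fun _ => Fin n) k) p (k.succAbove j)) :=
        (Equiv.sum_comp _ _).symm
    _ = ∑ p : Fin n × (Fin m → Fin n), g p.2 := by
        refine Finset.sum_congr rfl fun p _ => ?_
        congr 1
        funext j
        simp [Fin.insertNthEquiv]
    _ = ∑ _a : Fin n, ∑ σ' : Fin m → Fin n, g σ' := Fintype.sum_prod_type ..
    _ = n • ∑ σ', g σ' := by
        simp [Finset.sum_const, Fintype.card_fin]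

lemma dip_wsum_eval {n m : ℕ} (hn : 0 < n) (k : Fin (m+1)) {M : Type*}
    [AddCommMonoid M] [Module ℝ M] (g : Fin n → M) :
    ∑ σ : Fin (m+1) → Fin n, ((1/(n:ℝ))^(m+1)) • g (σ k) = (1/(n:ℝ)) • ∑ a, g a := by
  have hn' : (n:ℝ) ≠ 0 := Nat.cast_ne_zero.2 hn.ne'
  rw [← Finset.smul_sum, dip_sum_eval k g, ← Nat.cast_smul_eq_nsmul ℝ, smul_smul]
  congr 1
  push_cast
  rw [pow_succ]
  rw [mul_comm ((1/(n:ℝ))^m) (1/(n:ℝ)), mul_assoc]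
  rw [one_div, inv_pow, inv_mul_cancel₀ (by positivity), mul_one]

lemma dip_wsum_tail {n m : ℕ} (hn : 0 < n) (k : Fin (m+1)) {M : Type*}
    [AddCommMonoid M] [Module ℝ M] (g : (Fin m → Fin n) → M) :
    ∑ σ : Fin (m+1) → Fin n, ((1/(n:ℝ))^(m+1)) • g (fun j => σ (k.succAbove j))
      = ∑ σ' : Fin m → Fin n, ((1/(n:ℝ))^m) • g σ' := by
  have hn' : (n:ℝ) ≠ 0 := Nat.cast_ne_zero.2 hn.ne'
  rw [← Finset.smul_sum, ← Finset.smul_sum, dip_sum_tail k g,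
    ← Nat.cast_smul_eq_nsmul ℝ, smul_smul]
  congr 1
  rw [pow_succ]
  rw [mul_assoc, one_div, inv_mul_cancel₀ hn', mul_one]

lemma dip_mean_decomp {M : Type*} [AddCommGroup M] [Module ℝ M] {m : ℕ}
    (Z : Fin (m+2) → M) :
    ∑ k : Fin (m+2), (1/((m+2:ℕ):ℝ)) •
        ((1/((m+1:ℕ):ℝ)) • ∑ j : Fin (m+1), Z (k.succAbove j))
      = (1/((m+2:ℕ):ℝ)) • ∑ j, Z j := by
  have hm1 : ((m+1:ℕ):ℝ) ≠ 0 := by positivity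
  have hsA : ∀ k : Fin (m+2), ∑ j : Fin (m+1), Z (k.succAbove j) = (∑ j, Z j) - Z k := by
    intro k
    rw [Fin.sum_univ_succAbove Z k]
    abel
  simp only [hsA]
  rw [← Finset.smul_sum, ← Finset.smul_sum, Finset.sum_sub_distrib, Finset.sum_const,
    Finset.card_univ, Fintype.card_fin, ← Nat.cast_smul_eq_nsmul ℝ]
  have hW : ((m+2:ℕ):ℝ) • (∑ j, Z j) - (∑ j, Z j) = ((m+1:ℕ):ℝ) • ∑ j, Z j := by
    have hc : ((m+2:ℕ):ℝ) = ((m+1:ℕ):ℝ) + 1 := by push_cast; ring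
    rw [hc, add_smul, one_smul, add_sub_cancel_right]
  rw [hW, smul_smul (1/((m+1:ℕ):ℝ)), one_div_mul_cancel hm1, one_smul]

/-- the empirical-risk functional on vectors of predictions -/
noncomputable def dipF {K n : ℕ} {Y : Type*} (ℓ : EuclideanSpace ℝ (Fin K) → Y → ℝ)
    (y : Fin n → Y) (u : Fin n → EuclideanSpace ℝ (Fin K)) : ℝ :=
  (1/(n:ℝ)) * ∑ i, ℓ (u i) (y i)

/-- the Monte Carlo average of `S` mixed predictions -/
noncomputable def dipMean {d K n : ℕ} (x : Fin n → EuclideanSpace ℝ (Fin d))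
    (h : EuclideanSpace ℝ (Fin d) → EuclideanSpace ℝ (Fin K)) (S : ℕ)
    (σ : Fin S → Fin n) (Λ : Fin S → ℝ) (i : Fin n) : EuclideanSpace ℝ (Fin K) :=
  (1/(S:ℝ)) • ∑ j, h (Λ j • x i + (1 - Λ j) • x (σ j))

end dipHelpers

/-- the Monte Carlo upper bounds `L̂_{upper,S}` on the empirical risk of the
data-interpolating predictor are monotonically non-increasing in the number of samples `S`,
and all dominate the empirical risk `L̂(f)`. -/
theorem dip_upper_bounds_monotone
    {d K n : ℕ} (hn : 0 < n)
    (x : Fin n → EuclideanSpace ℝ (Fin d)) {Y : Type*} (y : Fin n → Y)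
    (h : EuclideanSpace ℝ (Fin d) → EuclideanSpace ℝ (Fin K))
    (ℓ : EuclideanSpace ℝ (Fin K) → Y → ℝ)
    (hconv : ∀ i, ConvexOn ℝ Set.univ (fun u => ℓ u (y i)))
    (μ : Measure ℝ) [IsProbabilityMeasure μ] (hμ : μ (Set.Icc (0:ℝ) 1)ᶜ = 0)
    (hint : ∀ i j, Integrable (fun l : ℝ => h (l • x i + (1 - l) • x j)) μ)
    -- the Monte Carlo upper bound with `S` samples
    (Lupper : ℕ → ℝ)
    (hLupper : ∀ S : ℕ, 0 < S → Lupper S =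
      ∫ Λ : Fin S → ℝ,
        ∑ σ : Fin S → Fin n, (1 / (n:ℝ)) ^ S *
          ((1 / (n:ℝ)) * ∑ i, ℓ ((1 / (S:ℝ)) • ∑ j, h (Λ j • x i + (1 - Λ j) • x (σ j))) (y i))
        ∂(Measure.pi fun _ => μ))
    (hintS : ∀ S : ℕ, 0 < S → ∀ σ : Fin S → Fin n,
      Integrable (fun Λ : Fin S → ℝ =>
        (1 / (n:ℝ)) * ∑ i, ℓ ((1 / (S:ℝ)) • ∑ j, h (Λ j • x i + (1 - Λ j) • x (σ j))) (y i))
        (Measure.pi fun _ => μ)) :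
    ∀ S : ℕ, 1 ≤ S →
      (1 / (n:ℝ)) * ∑ i, ℓ (∫ l, (1 / (n:ℝ)) • ∑ j, h (l • x i + (1 - l) • x j) ∂μ) (y i)
          ≤ Lupper (S + 1)
        ∧ Lupper (S + 1) ≤ Lupper S := by
  classical
  have hn' : (n:ℝ) ≠ 0 := Nat.cast_ne_zero.2 hn.ne'
  -- bridge to the `dipF`/`dipMean` formulation
  have hintS' : ∀ S : ℕ, 0 < S → ∀ σ : Fin S → Fin n,
      Integrable (fun Λ : Fin S → ℝ => dipF ℓ y (dipMean x h S σ Λ))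
        (Measure.pi fun _ : Fin S => μ) := fun S hS σ => hintS S hS σ
  have hLupper' : ∀ S : ℕ, 0 < S → Lupper S =
      ∫ Λ : Fin S → ℝ, ∑ σ : Fin S → Fin n,
        (1/(n:ℝ))^S * dipF ℓ y (dipMean x h S σ Λ) ∂(Measure.pi fun _ : Fin S => μ) :=
    fun S hS => hLupper S hS
  -- convexity and continuity of `dipF`
  have hFconv : ConvexOn ℝ Set.univ (dipF ℓ y (n := n)) := by
    have h1 : ∀ i : Fin n, ConvexOn ℝ Set.univ
        (fun u : Fin n → EuclideanSpace ℝ (Fin K) => ℓ (u i) (y i)) := by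
      intro i
      have := (hconv i).comp_affineMap
        ((LinearMap.proj i :
          (Fin n → EuclideanSpace ℝ (Fin K)) →ₗ[ℝ] EuclideanSpace ℝ (Fin K)).toAffineMap)
      simpa [Function.comp_def] using this
    have h2 := dip_convexOn_sum Finset.univ _ (fun i (_ : i ∈ Finset.univ) => h1 i)
    have h3 := h2.smul (le_of_lt (by positivity : (0:ℝ) < 1/(n:ℝ)))
    exact h3
  have hFcont : ContinuousOn (dipF ℓ y (n := n)) Set.univ := hFconv.continuousOn isOpen_univ
  -- integrability of single coordinates
  have hint1 : ∀ (m : ℕ) (j : Fin (m+1)) (i a : Fin n),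
      Integrable (fun Λ : Fin (m+1) → ℝ => h (Λ j • x i + (1 - Λ j) • x a))
        (Measure.pi fun _ : Fin (m+1) => μ) := fun m j i a =>
    ((dip_mp_eval μ j).integrable_comp (hint i a).aestronglyMeasurable).mpr (hint i a)
  have hintg1 : ∀ (m : ℕ) (j : Fin (m+1)) (i a : Fin n),
      ∫ Λ : Fin (m+1) → ℝ, h (Λ j • x i + (1 - Λ j) • x a) ∂(Measure.pi fun _ => μ)
        = ∫ l, h (l • x i + (1 - l) • x a) ∂μ := fun m j i a =>
    dip_integral_comp_mp (dip_mp_eval μ j) (hint i a).aestronglyMeasurable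
  -- integrability of the vector of Monte Carlo means
  have hmean_int : ∀ (m : ℕ) (σ : Fin (m+1) → Fin n),
      Integrable (dipMean x h (m+1) σ) (Measure.pi fun _ : Fin (m+1) => μ) := by
    intro m σ
    have hrepr : dipMean x h (m+1) σ = fun Λ => ∑ i : Fin n,
        Pi.single i ((1/((m+1:ℕ):ℝ)) • ∑ j, h (Λ j • x i + (1 - Λ j) • x (σ j))) := by
      funext Λ i
      rw [Finset.sum_apply]
      rw [Fintype.sum_pi_single]
      rfl
    rw [hrepr]
    refine integrable_finset_sum _ fun i _ => ?_
    have hci : Integrable (fun Λ : Fin (m+1) → ℝ =>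
        (1/((m+1:ℕ):ℝ)) • ∑ j, h (Λ j • x i + (1 - Λ j) • x (σ j)))
        (Measure.pi fun _ : Fin (m+1) => μ) :=
      by have := (integrable_finset_sum Finset.univ fun j _ => hint1 m j i (σ j)).smul
          (1/((m+1:ℕ):ℝ)); exact this
    let Li : EuclideanSpace ℝ (Fin K) →L[ℝ] (Fin n → EuclideanSpace ℝ (Fin K)) :=
      { toLinearMap := LinearMap.single ℝ (fun _ => EuclideanSpace ℝ (Fin K)) i
        cont := continuous_single (A := fun _ : Fin n => EuclideanSpace ℝ (Fin K)) i }
    exact Li.integrable_comp hci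
  -- the coordinates of the expected Monte Carlo mean
  have hmean_intgl : ∀ (m : ℕ) (σ : Fin (m+1) → Fin n),
      (∫ Λ, dipMean x h (m+1) σ Λ ∂(Measure.pi fun _ : Fin (m+1) => μ))
        = fun i => (1/((m+1:ℕ):ℝ)) •
            ∑ j : Fin (m+1), ∫ l, h (l • x i + (1 - l) • x (σ j)) ∂μ := by
    intro m σ
    funext i
    have hproj := (ContinuousLinearMap.proj (R := ℝ)
      (φ := fun _ : Fin n => EuclideanSpace ℝ (Fin K)) i).integral_comp_comm (hmean_int m σ)
    have h0 : (∫ Λ, dipMean x h (m+1) σ Λ ∂(Measure.pi fun _ : Fin (m+1) => μ)) i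
        = ∫ Λ, dipMean x h (m+1) σ Λ i ∂(Measure.pi fun _ : Fin (m+1) => μ) := hproj.symm
    rw [h0]
    calc ∫ Λ, dipMean x h (m+1) σ Λ i ∂(Measure.pi fun _ : Fin (m+1) => μ)
        = ∫ Λ : Fin (m+1) → ℝ, (1/((m+1:ℕ):ℝ)) •
            ∑ j, h (Λ j • x i + (1 - Λ j) • x (σ j)) ∂(Measure.pi fun _ => μ) := rfl
      _ = (1/((m+1:ℕ):ℝ)) • ∫ Λ : Fin (m+1) → ℝ,
            ∑ j, h (Λ j • x i + (1 - Λ j) • x (σ j)) ∂(Measure.pi fun _ => μ) :=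
          integral_smul _ _
      _ = (1/((m+1:ℕ):ℝ)) • ∑ j : Fin (m+1), ∫ Λ : Fin (m+1) → ℝ,
            h (Λ j • x i + (1 - Λ j) • x (σ j)) ∂(Measure.pi fun _ => μ) := by
          rw [integral_finset_sum _ (fun j _ => hint1 m j i (σ j))]
      _ = (1/((m+1:ℕ):ℝ)) • ∑ j : Fin (m+1), ∫ l, h (l • x i + (1 - l) • x (σ j)) ∂μ := by
          rw [Finset.sum_congr rfl (fun j _ => hintg1 m j i (σ j))]
  -- weights
  have hw_nonneg : ∀ S : ℕ, (0:ℝ) ≤ (1/(n:ℝ))^S := fun S => by positivity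
  have hw_sum : ∀ S : ℕ, ∑ _σ : Fin S → Fin n, (1/(n:ℝ))^S = 1 := by
    intro S
    rw [Finset.sum_const, Finset.card_univ, Fintype.card_fun, Fintype.card_fin, Fintype.card_fin,
      nsmul_eq_mul]
    push_cast
    rw [← mul_pow]
    rw [mul_one_div, div_self hn', one_pow]
  -- Lupper as a finite sum of integrals
  have hLup : ∀ S : ℕ, ∀ hS : 0 < S, Lupper S =
      ∑ σ : Fin S → Fin n, (1/(n:ℝ))^S *
        ∫ Λ, dipF ℓ y (dipMean x h S σ Λ) ∂(Measure.pi fun _ : Fin S => μ) := by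
    intro S hS
    rw [hLupper' S hS]
    rw [integral_finset_sum _ (fun σ _ => (hintS' S hS σ).const_mul _)]
    exact Finset.sum_congr rfl fun σ _ => integral_const_mul _ _
  -- LOWER BOUND
  have lower : ∀ m : ℕ,
      dipF ℓ y (fun i => ∫ l, (1/(n:ℝ)) • ∑ j, h (l • x i + (1 - l) • x j) ∂μ)
        ≤ Lupper (m+1) := by
    intro m
    have hSpos : 0 < m+1 := Nat.succ_pos m
    have hm1 : ((m+1:ℕ):ℝ) ≠ 0 := by positivity
    -- the target vector as convex combination of expected means
    have key : ∀ (Mv : Fin n → EuclideanSpace ℝ (Fin K)),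
        ∑ σ : Fin (m+1) → Fin n, ((1/(n:ℝ))^(m+1)) •
          ((1/((m+1:ℕ):ℝ)) • ∑ j : Fin (m+1), Mv (σ j))
          = (1/(n:ℝ)) • ∑ a, Mv a := by
      intro Mv
      have h1 : ∀ σ : Fin (m+1) → Fin n,
          ((1/(n:ℝ))^(m+1)) • ((1/((m+1:ℕ):ℝ)) • ∑ j : Fin (m+1), Mv (σ j))
            = (1/((m+1:ℕ):ℝ)) • ∑ j : Fin (m+1), ((1/(n:ℝ))^(m+1)) • Mv (σ j) := by
        intro σ
        rw [smul_comm, Finset.smul_sum]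
      rw [Finset.sum_congr rfl (fun σ _ => h1 σ), ← Finset.smul_sum, Finset.sum_comm]
      rw [Finset.sum_congr rfl (fun j (_ : j ∈ Finset.univ) => dip_wsum_eval hn j Mv)]
      rw [Finset.sum_const, Finset.card_univ, Fintype.card_fin,
        ← Nat.cast_smul_eq_nsmul ℝ, smul_smul, one_div, inv_mul_cancel₀ hm1, one_smul]
    have hveq : (fun i => ∫ l, (1/(n:ℝ)) • ∑ j, h (l • x i + (1 - l) • x j) ∂μ)
        = ∑ σ : Fin (m+1) → Fin n, ((1/(n:ℝ))^(m+1)) •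
            (∫ Λ, dipMean x h (m+1) σ Λ ∂(Measure.pi fun _ : Fin (m+1) => μ)) := by
      funext i
      rw [Finset.sum_apply]
      have hLHS : (∫ l, (1/(n:ℝ)) • ∑ j, h (l • x i + (1 - l) • x j) ∂μ)
          = (1/(n:ℝ)) • ∑ a, ∫ l, h (l • x i + (1 - l) • x a) ∂μ := by
        rw [integral_smul, integral_finset_sum _ (fun a _ => hint i a)]
      rw [hLHS, ← key (fun a => ∫ l, h (l • x i + (1 - l) • x a) ∂μ)]
      refine Finset.sum_congr rfl fun σ _ => ?_
      rw [Pi.smul_apply, hmean_intgl m σ]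
    calc dipF ℓ y (fun i => ∫ l, (1/(n:ℝ)) • ∑ j, h (l • x i + (1 - l) • x j) ∂μ)
        = dipF ℓ y (∑ σ : Fin (m+1) → Fin n, ((1/(n:ℝ))^(m+1)) •
            (∫ Λ, dipMean x h (m+1) σ Λ ∂(Measure.pi fun _ : Fin (m+1) => μ))) := by
          rw [hveq]
      _ ≤ ∑ σ : Fin (m+1) → Fin n, ((1/(n:ℝ))^(m+1)) •
            dipF ℓ y (∫ Λ, dipMean x h (m+1) σ Λ ∂(Measure.pi fun _ : Fin (m+1) => μ)) :=
          hFconv.map_sum_le (fun σ _ => hw_nonneg _) (hw_sum _) (fun σ _ => Set.mem_univ _)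
      _ ≤ ∑ σ : Fin (m+1) → Fin n, ((1/(n:ℝ))^(m+1)) *
            ∫ Λ, dipF ℓ y (dipMean x h (m+1) σ Λ) ∂(Measure.pi fun _ : Fin (m+1) => μ) := by
          refine Finset.sum_le_sum fun σ _ => ?_
          rw [smul_eq_mul]
          refine mul_le_mul_of_nonneg_left ?_ (hw_nonneg _)
          exact hFconv.map_integral_le hFcont isClosed_univ
            (Filter.Eventually.of_forall fun _ => Set.mem_univ _)
            (hmean_int m σ) (hintS' (m+1) hSpos σ)
      _ = Lupper (m+1) := (hLup (m+1) hSpos).symm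
  -- MONOTONICITY
  have mono : ∀ m : ℕ, Lupper (m+2) ≤ Lupper (m+1) := by
    intro m
    have hT : (0:ℕ) < m+1 := Nat.succ_pos m
    have hT1 : (0:ℕ) < m+2 := Nat.succ_pos _
    have hm2 : ((m+2:ℕ):ℝ) ≠ 0 := by positivity
    have hm1 : ((m+1:ℕ):ℝ) ≠ 0 := by positivity
    -- decomposition of the (m+2)-sample mean into leave-one-out means
    have hdecomp : ∀ (σ : Fin (m+2) → Fin n) (Λ : Fin (m+2) → ℝ),
        dipMean x h (m+2) σ Λ = ∑ k : Fin (m+2), (1/((m+2:ℕ):ℝ)) •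
          dipMean x h (m+1) (fun j => σ (k.succAbove j)) (fun j => Λ (k.succAbove j)) := by
      intro σ Λ
      funext i
      rw [Finset.sum_apply]
      exact (dip_mean_decomp (fun j => h (Λ j • x i + (1 - Λ j) • x (σ j)))).symm
    -- pointwise convexity bound
    have hptwise : ∀ (σ : Fin (m+2) → Fin n) (Λ : Fin (m+2) → ℝ),
        dipF ℓ y (dipMean x h (m+2) σ Λ)
          ≤ (1/((m+2:ℕ):ℝ)) * ∑ k : Fin (m+2),
              dipF ℓ y (dipMean x h (m+1) (fun j => σ (k.succAbove j))
                (fun j => Λ (k.succAbove j))) := by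
      intro σ Λ
      rw [hdecomp σ Λ]
      have hsum1 : ∑ _k : Fin (m+2), 1/((m+2:ℕ):ℝ) = 1 := by
        rw [Finset.sum_const, Finset.card_univ, Fintype.card_fin, nsmul_eq_mul, mul_one_div,
          div_self hm2]
      have hj := hFconv.map_sum_le (w := fun _ : Fin (m+2) => 1/((m+2:ℕ):ℝ))
        (p := fun k => dipMean x h (m+1) (fun j => σ (k.succAbove j))
          (fun j => Λ (k.succAbove j)))
        (fun _ _ => by positivity) hsum1 (fun _ _ => Set.mem_univ _)
      refine hj.trans_eq ?_
      rw [Finset.mul_sum]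
      exact Finset.sum_congr rfl fun k _ => smul_eq_mul _ _
    -- integrability of the leave-one-out objective
    have hGGint : Integrable (fun Λ' : Fin (m+1) → ℝ => ∑ σ' : Fin (m+1) → Fin n,
        (1/(n:ℝ))^(m+1) * dipF ℓ y (dipMean x h (m+1) σ' Λ'))
        (Measure.pi fun _ : Fin (m+1) => μ) :=
      integrable_finset_sum _ fun σ' _ => (hintS' (m+1) hT σ').const_mul _
    have hGGcomp : ∀ k : Fin (m+2), Integrable (fun Λ : Fin (m+2) → ℝ =>
        ∑ σ' : Fin (m+1) → Fin n, (1/(n:ℝ))^(m+1) *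
          dipF ℓ y (dipMean x h (m+1) σ' (fun j => Λ (k.succAbove j))))
        (Measure.pi fun _ : Fin (m+2) => μ) := fun k =>
      ((dip_mp_tail μ k).integrable_comp hGGint.aestronglyMeasurable).mpr hGGint
    have hGGintgl : ∀ k : Fin (m+2),
        (∫ Λ : Fin (m+2) → ℝ, ∑ σ' : Fin (m+1) → Fin n, (1/(n:ℝ))^(m+1) *
          dipF ℓ y (dipMean x h (m+1) σ' (fun j => Λ (k.succAbove j)))
          ∂(Measure.pi fun _ => μ))
          = Lupper (m+1) := by
      intro k
      have hcomp := dip_integral_comp_mp (dip_mp_tail μ k) hGGint.aestronglyMeasurable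
      exact hcomp.trans (hLupper' (m+1) hT).symm
    -- reorganizing the upper bound integrand
    have hBeq : ∀ Λ : Fin (m+2) → ℝ,
        ∑ σ : Fin (m+2) → Fin n, (1/(n:ℝ))^(m+2) *
          ((1/((m+2:ℕ):ℝ)) * ∑ k : Fin (m+2),
            dipF ℓ y (dipMean x h (m+1) (fun j => σ (k.succAbove j))
              (fun j => Λ (k.succAbove j))))
          = (1/((m+2:ℕ):ℝ)) * ∑ k : Fin (m+2), ∑ σ' : Fin (m+1) → Fin n,
              (1/(n:ℝ))^(m+1) * dipF ℓ y (dipMean x h (m+1) σ'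
                (fun j => Λ (k.succAbove j))) := by
      intro Λ
      calc ∑ σ : Fin (m+2) → Fin n, (1/(n:ℝ))^(m+2) *
            ((1/((m+2:ℕ):ℝ)) * ∑ k : Fin (m+2),
              dipF ℓ y (dipMean x h (m+1) (fun j => σ (k.succAbove j))
                (fun j => Λ (k.succAbove j))))
          = ∑ σ : Fin (m+2) → Fin n, (1/((m+2:ℕ):ℝ)) * ∑ k : Fin (m+2), (1/(n:ℝ))^(m+2) *
              dipF ℓ y (dipMean x h (m+1) (fun j => σ (k.succAbove j))
                (fun j => Λ (k.succAbove j))) := by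
            refine Finset.sum_congr rfl fun σ _ => ?_
            rw [mul_left_comm, Finset.mul_sum]
        _ = (1/((m+2:ℕ):ℝ)) * ∑ σ : Fin (m+2) → Fin n, ∑ k : Fin (m+2), (1/(n:ℝ))^(m+2) *
              dipF ℓ y (dipMean x h (m+1) (fun j => σ (k.succAbove j))
                (fun j => Λ (k.succAbove j))) := (Finset.mul_sum _ _ _).symm
        _ = (1/((m+2:ℕ):ℝ)) * ∑ k : Fin (m+2), ∑ σ : Fin (m+2) → Fin n, (1/(n:ℝ))^(m+2) *
              dipF ℓ y (dipMean x h (m+1) (fun j => σ (k.succAbove j))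
                (fun j => Λ (k.succAbove j))) := by rw [Finset.sum_comm]
        _ = (1/((m+2:ℕ):ℝ)) * ∑ k : Fin (m+2), ∑ σ' : Fin (m+1) → Fin n,
              (1/(n:ℝ))^(m+1) * dipF ℓ y (dipMean x h (m+1) σ'
                (fun j => Λ (k.succAbove j))) := by
            refine congrArg _ (Finset.sum_congr rfl fun k _ => ?_)
            have hmt := dip_wsum_tail (n := n) (m := m+1) hn k
              (g := fun σ' => dipF ℓ y (dipMean x h (m+1) σ' (fun j => Λ (k.succAbove j))))
            simpa [smul_eq_mul] using hmt
    -- final chain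
    calc Lupper (m+2)
        = ∫ Λ : Fin (m+2) → ℝ, ∑ σ : Fin (m+2) → Fin n, (1/(n:ℝ))^(m+2) *
            dipF ℓ y (dipMean x h (m+2) σ Λ) ∂(Measure.pi fun _ => μ) := hLupper' (m+2) hT1
      _ ≤ ∫ Λ : Fin (m+2) → ℝ, (1/((m+2:ℕ):ℝ)) * ∑ k : Fin (m+2),
            ∑ σ' : Fin (m+1) → Fin n, (1/(n:ℝ))^(m+1) *
              dipF ℓ y (dipMean x h (m+1) σ' (fun j => Λ (k.succAbove j)))
            ∂(Measure.pi fun _ => μ) := by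
          refine integral_mono
            (integrable_finset_sum _ fun σ _ => (hintS' (m+2) hT1 σ).const_mul _)
            ((integrable_finset_sum _ fun k _ => hGGcomp k).const_mul _) ?_
          intro Λ
          refine le_trans ?_ (le_of_eq (hBeq Λ))
          refine Finset.sum_le_sum fun σ _ => ?_
          exact mul_le_mul_of_nonneg_left (hptwise σ Λ) (hw_nonneg _)
      _ = (1/((m+2:ℕ):ℝ)) * ∑ k : Fin (m+2), ∫ Λ : Fin (m+2) → ℝ,
            ∑ σ' : Fin (m+1) → Fin n, (1/(n:ℝ))^(m+1) *
              dipF ℓ y (dipMean x h (m+1) σ' (fun j => Λ (k.succAbove j)))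
            ∂(Measure.pi fun _ => μ) := by
          rw [integral_const_mul, integral_finset_sum _ fun k _ => hGGcomp k]
      _ = (1/((m+2:ℕ):ℝ)) * ∑ _k : Fin (m+2), Lupper (m+1) := by
          exact congrArg _ (Finset.sum_congr rfl fun k _ => hGGintgl k)
      _ = Lupper (m+1) := by
          rw [Finset.sum_const, Finset.card_univ, Fintype.card_fin, nsmul_eq_mul,
            ← mul_assoc, one_div, inv_mul_cancel₀ hm2, one_mul]
  intro S hS
  obtain ⟨m, rfl⟩ : ∃ m, S = m + 1 := ⟨S - 1, (Nat.succ_pred_eq_of_pos hS).symm⟩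
  exact ⟨lower (m+1), mono m⟩
end

section
/- For i.i.d. λ ~ p(λ) and x' uniform over {x_1,…,x_n}, the expected squared norm of mixed samples satisfies E_{λ,x'}[∑_{i=1}^n ‖λx_i + (1-λ)x'‖₂²] = n·(C_λ·(1/n)∑_i ‖x_i‖₂² + (1-C_λ)·‖(1/n)∑_i x_i‖₂²), where C_λ = E_λ[λ² + (1-λ)²]. -/
open MeasureTheory

/-- for λ ~ p(λ) on [0,1] and x' uniform over {x_1,…,x_n}, the expected squared
norm of mixed samples equals n·(C_λ·(1/n)∑‖x_i‖² + (1-C_λ)·‖(1/n)∑x_i‖²), where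
C_λ = E[λ² + (1-λ)²]. -/
theorem expected_mixed_sq_norm
    {d n : ℕ} (hn : 0 < n) (x : Fin n → EuclideanSpace ℝ (Fin d))
    (μ : Measure ℝ) [IsProbabilityMeasure μ] (hμ : μ (Set.Icc (0:ℝ) 1)ᶜ = 0) :
    ∫ l, (1 / (n:ℝ)) * ∑ j, ∑ i, ‖l • x i + (1 - l) • x j‖ ^ 2 ∂μ
      = (n:ℝ) *
        ((∫ l, (l ^ 2 + (1 - l) ^ 2) ∂μ) * ((1 / (n:ℝ)) * ∑ i, ‖x i‖ ^ 2)
          + (1 - ∫ l, (l ^ 2 + (1 - l) ^ 2) ∂μ) * ‖(1 / (n:ℝ)) • ∑ i, x i‖ ^ 2) := by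
  have hn' : (n:ℝ) ≠ 0 := Nat.cast_ne_zero.mpr hn.ne'
  set S : ℝ := ∑ i, ‖x i‖ ^ 2 with hS
  set T : ℝ := ‖∑ i, x i‖ ^ 2 with hT
  -- T equals double sum of inner products
  have hT2 : T = ∑ j, ∑ i, (inner ℝ (x i) (x j) : ℝ) := by
    rw [hT, ← real_inner_self_eq_norm_sq, sum_inner]
    refine Finset.sum_congr rfl fun j _ => ?_
    rw [inner_sum]
    exact Finset.sum_congr rfl fun i _ => real_inner_comm _ _
  -- pointwise key identity
  have key : ∀ l : ℝ, (1 / (n:ℝ)) * ∑ j, ∑ i, ‖l • x i + (1 - l) • x j‖ ^ 2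
      = (l ^ 2 + (1 - l) ^ 2) * S + (1 - (l ^ 2 + (1 - l) ^ 2)) * ((1 / (n:ℝ)) * T) := by
    intro l
    have expand : ∀ a b : EuclideanSpace ℝ (Fin d),
        ‖l • a + (1 - l) • b‖ ^ 2
          = l ^ 2 * ‖a‖ ^ 2 + (1 - l) ^ 2 * ‖b‖ ^ 2
            + 2 * l * (1 - l) * (inner ℝ a b : ℝ) := by
      intro a b
      rw [@norm_add_sq_real, real_inner_smul_left, real_inner_smul_right,
        norm_smul, norm_smul, mul_pow, mul_pow, Real.norm_eq_abs, Real.norm_eq_abs,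
        sq_abs, sq_abs]
      ring
    have hsum : ∑ j, ∑ i, ‖l • x i + (1 - l) • x j‖ ^ 2
        = (n:ℝ) * (l ^ 2 * S) + (n:ℝ) * ((1 - l) ^ 2 * S)
          + 2 * l * (1 - l) * (∑ j, ∑ i, (inner ℝ (x i) (x j) : ℝ)) := by
      simp_rw [expand, Finset.sum_add_distrib, ← Finset.mul_sum, ← hS,
        Finset.sum_const, Finset.card_univ, Fintype.card_fin, nsmul_eq_mul]
      simp only [← Finset.mul_sum, ← hS]
      ring
    rw [hsum, ← hT2]
    field_simp
    ring
  -- integrability of the weight function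
  have hae : ∀ᵐ l ∂μ, l ∈ Set.Icc (0:ℝ) 1 := by
    rw [ae_iff]
    simpa [Set.compl_def] using hμ
  have hf : Integrable (fun l : ℝ => l ^ 2 + (1 - l) ^ 2) μ := by
    refine Integrable.mono' (integrable_const (2:ℝ))
      (Continuous.aestronglyMeasurable (by continuity)) ?_
    filter_upwards [hae] with l hl
    obtain ⟨h0, h1⟩ := hl
    rw [Real.norm_eq_abs, abs_of_nonneg (by positivity)]
    nlinarith
  -- rewrite LHS integrand
  rw [show (fun l : ℝ => (1 / (n:ℝ)) * ∑ j, ∑ i, ‖l • x i + (1 - l) • x j‖ ^ 2)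
      = fun l : ℝ => (l ^ 2 + (1 - l) ^ 2) * S
          + (1 - (l ^ 2 + (1 - l) ^ 2)) * ((1 / (n:ℝ)) * T) from funext key]
  have hg : Integrable (fun l : ℝ => 1 - (l ^ 2 + (1 - l) ^ 2)) μ := by
    exact (integrable_const (1:ℝ)).sub hf
  rw [integral_add (hf.mul_const S) (hg.mul_const _),
    integral_mul_const, integral_mul_const, integral_sub (integrable_const (1:ℝ)) hf,
    integral_const]
  simp only [measure_univ, ENNReal.toReal_one, probReal_univ, smul_eq_mul, mul_one]
  have hnorm : ‖(1 / (n:ℝ)) • ∑ i, x i‖ ^ 2 = (1 / (n:ℝ)) ^ 2 * T := by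
    rw [norm_smul, mul_pow, Real.norm_eq_abs, sq_abs, hT]
  rw [hnorm]
  field_simp
end
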